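/- For an update flow network with two flow pairs whose dependency graph D is acyclic, the minimum number of rounds of a feasible update sequence is at least L + 1, where L is the number of vertices on a longest directed path in D, whenever the first block on such a path has at least 2 update edges or its last block has at least 2 old edges. -/

import Mathlib

set_option linter.unusedSectionVars false
set_option linter.unreachableTactic false
set_option linter.unusedTactic false
set_option linter.deprecated false
set_option maxHeartbeats 1000000


/-!
A formal model of congestion-free flow rerouting (network update scheduling).
An update flow network consists of a source `s`, a terminal `t`, edge
capacities, and `k` update flow pairs, each given by an old `s`-`t` path and
an update (new) `s`-`t` path (represented as lists of vertices) with a demand.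
An update sequence assigns to every update `(v, i)` (vertex `v`, pair `i`) a
round; it is feasible if resolving all updates of earlier rounds together with
any subset of the current round always leaves, for every pair, a unique valid
(capacity-respecting) transient `s`-`t` path among the active edges, and the
family of transient paths jointly respects the capacities.
-/

namespace FlowUpdate

variable {V : Type} [DecidableEq V] {k : ℕ}

/-- The edges of a path given as a list of vertices. -/
def edgesOf (p : List V) : List (V × V) := p.zip p.tail

/-- The subpath of `p` from vertex `a` to vertex `z` (inclusive). -/
def segment (p : List V) (a z : V) : List V :=
  ((p.dropWhile (fun v => decide (v ≠ a))).takeWhile (fun v => decide (v ≠ z))) ++ [z]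

/-- The outgoing edge of `v` on the path `p`, if any. -/
def outEdge (p : List V) (v : V) : Option (V × V) :=
  (edgesOf p).find? (fun e => decide (e.1 = v))

/-- An update flow network with `k` update flow pairs. -/
structure UFN (V : Type) (k : ℕ) where
  s : V
  t : V
  cap : V → V → ℕ
  old : Fin k → List V
  new : Fin k → List V
  demand : Fin k → ℕ

namespace UFN

/-- After resolving the set of updates `U`, edge `e` is active for pair `i` iff
it is an old edge whose tail is not yet updated, or a new edge whose tail is
updated. -/
def active (G : UFN V k) (U : Set (V × Fin k)) (i : Fin k) (e : V × V) : Prop :=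
  (e ∈ edgesOf (G.old i) ∧ (e.1, i) ∉ U) ∨ (e ∈ edgesOf (G.new i) ∧ (e.1, i) ∈ U)

/-- `p` is a simple `s`-`t` path all of whose edges satisfy `E`. -/
def IsPathIn (E : V × V → Prop) (s t : V) (p : List V) : Prop :=
  p.head? = some s ∧ p.getLast? = some t ∧ List.Chain' (fun u v => E (u, v)) p ∧ p.Nodup

/-- `p` respects the capacities for the demand of pair `i`. -/
def ValidPath (G : UFN V k) (i : Fin k) (p : List V) : Prop :=
  ∀ e ∈ edgesOf p, G.demand i ≤ G.cap e.1 e.2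

/-- `T` is the unique valid transient path of pair `i` after resolving `U`. -/
def TransientPair (G : UFN V k) (U : Set (V × Fin k)) (i : Fin k) (T : List V) : Prop :=
  IsPathIn (G.active U i) G.s G.t T ∧ G.ValidPath i T ∧
    ∀ p, IsPathIn (G.active U i) G.s G.t p → G.ValidPath i p → p = T

/-- After resolving `U`, every pair has a unique valid transient path, and the
family of transient paths jointly respects the capacities. -/
def TransientFamily (G : UFN V k) (U : Set (V × Fin k)) : Prop :=
  ∃ T : Fin k → List V,
    (∀ i, G.TransientPair U i (T i)) ∧
    (∀ u v : V, (∑ i : Fin k, if (u, v) ∈ edgesOf (T i) then G.demand i else 0) ≤ G.cap u v)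

/-- An update sequence (an assignment of rounds to all updates) is feasible if
after resolving all updates of rounds `< r` together with any subset of the
updates of round `r`, all pairs admit a transient family. -/
def Feasible (G : UFN V k) (R : V × Fin k → ℕ) : Prop :=
  ∀ r : ℕ, ∀ S : Set (V × Fin k), (∀ u ∈ S, R u = r) →
    G.TransientFamily ({u | R u < r} ∪ S)

/-- `p` is a simple path from the source to the terminal. -/
def IsStPath (G : UFN V k) (p : List V) : Prop :=
  p.head? = some G.s ∧ p.getLast? = some G.t ∧ p.Nodup

/-- Well-formedness of an update flow network: all old and new flows are simple
`s`-`t` paths, each pair forms a DAG, each new path respects capacities for its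
own demand, and both the old family and the new family jointly respect the
capacities. -/
def WellFormed (G : UFN V k) : Prop :=
  (∀ i, G.IsStPath (G.old i) ∧ G.IsStPath (G.new i)) ∧
  (∀ i, ∃ ord : V → ℕ, ∀ e ∈ edgesOf (G.old i) ++ edgesOf (G.new i), ord e.1 < ord e.2) ∧
  (∀ i, G.ValidPath i (G.new i)) ∧
  (∀ u v : V, (∑ i : Fin k, if (u, v) ∈ edgesOf (G.old i) then G.demand i else 0) ≤ G.cap u v) ∧
  (∀ u v : V, (∑ i : Fin k, if (u, v) ∈ edgesOf (G.new i) then G.demand i else 0) ≤ G.cap u v)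

/-- The common vertices of the old and new path of pair `i`, in path order. -/
def commons (G : UFN V k) (i : Fin k) : List V :=
  (G.old i).filter (fun v => decide (v ∈ G.new i))

/-- A block of pair `i` is a pair `(a, z)` of consecutive common vertices of the
old and new paths of `i`. -/
def IsBlock (G : UFN V k) (i : Fin k) (b : V × V) : Prop :=
  b ∈ edgesOf (G.commons i)

/-- A (candidate) block: a pair index together with its start and end vertices. -/
abbrev Blk (V : Type) (k : ℕ) := Fin k × V × V

def IsBlk (G : UFN V k) (b : Blk V k) : Prop := G.IsBlock b.1 b.2

/-- The old-path segment of a block. -/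
def blkOldSeg (G : UFN V k) (b : Blk V k) : List V := segment (G.old b.1) b.2.1 b.2.2

/-- The update-path segment of a block. -/
def blkNewSeg (G : UFN V k) (b : Blk V k) : List V := segment (G.new b.1) b.2.1 b.2.2

/-- Block `b1` depends on block `b2` (written `b1 → b2`) if they belong to
different pairs and some edge lies on `b1`'s update path and on `b2`'s old path
with capacity less than the sum of the two demands. -/
def Dep (G : UFN V k) (b1 b2 : Blk V k) : Prop :=
  G.IsBlk b1 ∧ G.IsBlk b2 ∧ b1.1 ≠ b2.1 ∧
  ∃ e : V × V, e ∈ edgesOf (G.blkNewSeg b1) ∧ e ∈ edgesOf (G.blkOldSeg b2) ∧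
    G.cap e.1 e.2 < G.demand b1.1 + G.demand b2.1

/-- The dependency graph contains a directed cycle. -/
def HasDepCycle (G : UFN V k) : Prop := ∃ b : Blk V k, Relation.TransGen G.Dep b b

/-- The number of rounds used by an update sequence. -/
def numRounds [Fintype V] (R : V × Fin k → ℕ) : ℕ :=
  (Finset.image R Finset.univ).card

/-- An update `(v, i)` is empty if `v`'s outgoing old edge and outgoing new edge
for pair `i` coincide (in particular if `v` has no outgoing edge for pair `i`). -/
def EmptyUpd (G : UFN V k) (u : V × Fin k) : Prop :=
  outEdge (G.old u.2) u.1 = outEdge (G.new u.2) u.1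

instance (G : UFN V k) (u : V × Fin k) : Decidable (G.EmptyUpd u) :=
  inferInstanceAs (Decidable (outEdge (G.old u.2) u.1 = outEdge (G.new u.2) u.1))

/-- `R` updates every block in (at most) 3 consecutive rounds: first all internal
update-path vertices of the block, then the start vertex, then all old-path-only
vertices of the block. -/
def BlockPattern (G : UFN V k) (R : V × Fin k → ℕ) : Prop :=
  ∀ b : Blk V k, G.IsBlk b → ∃ r : ℕ,
    (∀ v ∈ G.blkNewSeg b, v ≠ b.2.1 → v ≠ b.2.2 → R (v, b.1) = r) ∧
    R (b.2.1, b.1) = r + 1 ∧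
    (∀ v ∈ G.blkOldSeg b, v ∉ G.new b.1 → R (v, b.1) = r + 2)

/-- The size of the network (total length of the flow paths). -/
def size (G : UFN V k) : ℕ := ∑ i : Fin k, ((G.old i).length + (G.new i).length)

end UFN

end FlowUpdate

namespace List
def get? {α : Type*} (l : List α) (n : ℕ) : Option α := l[n]?
section
variable {α : Type*}
@[simp] theorem get?_eq_getElem? (l : List α) (n : ℕ) : l.get? n = l[n]? := rfl
theorem get?_cons_succ {a : α} {l : List α} {n : ℕ} : (a :: l).get? (n + 1) = l.get? n := rfl
theorem get?_cons_zero {a : α} {l : List α} : (a :: l).get? 0 = some a := rfl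
theorem get?_eq_some {l : List α} {n : ℕ} {a : α} :
    l.get? n = some a ↔ ∃ h : n < l.length, l.get ⟨n, h⟩ = a := by
  simp [List.getElem?_eq_some_iff]
theorem get?_inj {xs : List α} {i j : ℕ} (h₀ : i < xs.length) (h₁ : xs.Nodup)
    (h₂ : xs.get? i = xs.get? j) : i = j := (List.getElem?_inj h₀ h₁).mp h₂
theorem get?_append_right {l₁ l₂ : List α} {n : ℕ} (h : l₁.length ≤ n) :
    (l₁ ++ l₂).get? n = l₂.get? (n - l₁.length) := by simp [List.getElem?_append_right h]
theorem get?_eq_get {l : List α} {n : ℕ} (h : n < l.length) : l.get? n = some (l.get ⟨n, h⟩) := by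
  simp [h]
theorem get?_mem {l : List α} {n : ℕ} {a : α} (h : l.get? n = some a) : a ∈ l :=
  List.mem_of_getElem? h
theorem mem_iff_get? {l : List α} {a : α} : a ∈ l ↔ ∃ n, l.get? n = some a := by
  simp [List.mem_iff_getElem?]
theorem get?_drop {L : List α} {i j : ℕ} : (L.drop i).get? j = L.get? (i + j) := by simp
end
end List

namespace FlowUpdate

variable {V : Type} [DecidableEq V]

theorem mem_edgesOf_iff {u v : V} : ∀ {p : List V},
    (u, v) ∈ edgesOf p ↔ ∃ l1 l2, p = l1 ++ u :: v :: l2 := by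
  intro p
  induction p with
  | nil =>
    simp only [edgesOf, List.zip_nil_left, List.not_mem_nil, false_iff]
    rintro ⟨l1, l2, h⟩; cases l1 <;> simp at h
  | cons a q ih =>
    cases q with
    | nil =>
      simp only [edgesOf, List.tail_cons, List.zip_nil_right, List.not_mem_nil, false_iff]
      rintro ⟨l1, l2, h⟩; cases l1 <;> simp at h <;> cases ‹_ ++ _ = []›
    | cons b r =>
      have hcons : edgesOf (a :: b :: r) = (a, b) :: edgesOf (b :: r) := rfl
      rw [hcons, List.mem_cons, ih]
      constructor
      · rintro (h | ⟨l1, l2, h⟩)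
        · obtain ⟨rfl, rfl⟩ := Prod.mk.inj h
          exact ⟨[], r, rfl⟩
        · exact ⟨a :: l1, l2, by rw [List.cons_append, h]⟩
      · rintro ⟨l1, l2, h⟩
        cases l1 with
        | nil => left; simp at h; simp [h.1, h.2.1]
        | cons x l1' =>
          right
          simp only [List.cons_append, List.cons.injEq] at h
          exact ⟨l1', l2, h.2⟩

theorem edgesOf_subset_of_infix {p q : List V} (h : q <:+: p) :
    ∀ e ∈ edgesOf q, e ∈ edgesOf p := by
  rintro ⟨u, v⟩ he
  rw [mem_edgesOf_iff] at he ⊢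
  obtain ⟨l1, l2, rfl⟩ := he
  obtain ⟨s, t, rfl⟩ := h
  exact ⟨s ++ l1, l2 ++ t, by simp⟩

theorem mem_fst_of_edgesOf {p : List V} {u v : V} (h : (u, v) ∈ edgesOf p) : u ∈ p := by
  obtain ⟨l1, l2, rfl⟩ := mem_edgesOf_iff.mp h; simp

theorem mem_snd_of_edgesOf {p : List V} {u v : V} (h : (u, v) ∈ edgesOf p) : v ∈ p := by
  obtain ⟨l1, l2, rfl⟩ := mem_edgesOf_iff.mp h; simp

theorem chain'_of_forall_edges {Q : V → V → Prop} : ∀ {p : List V},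
    (∀ e ∈ edgesOf p, Q e.1 e.2) → List.Chain' Q p := by
  intro p
  induction p with
  | nil => intro; exact List.isChain_nil
  | cons a q ih =>
    intro h
    cases q with
    | nil => exact List.isChain_singleton a
    | cons b r =>
      rw [List.Chain', List.isChain_cons_cons]
      refine ⟨h (a, b) (mem_edgesOf_iff.mpr ⟨[], r, rfl⟩), ih ?_⟩
      intro e he
      obtain ⟨e1, e2⟩ := e
      obtain ⟨l1, l2, hh⟩ := mem_edgesOf_iff.mp he
      exact h (e1, e2) (mem_edgesOf_iff.mpr ⟨a :: l1, l2, by rw [List.cons_append, hh]⟩)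

theorem forall_edges_of_chain' {Q : V → V → Prop} {p : List V}
    (h : List.Chain' Q p) : ∀ e ∈ edgesOf p, Q e.1 e.2 := by
  rintro ⟨u, v⟩ he
  obtain ⟨l1, l2, rfl⟩ := mem_edgesOf_iff.mp he
  have h2 : List.Chain' Q [u, v] := h.infix ⟨l1, l2, by simp⟩
  exact (List.isChain_cons_cons.mp h2).1

theorem edgesOf_of_get? : ∀ {p : List V} {n : ℕ} {u v : V},
    p.get? n = some u → p.get? (n + 1) = some v → (u, v) ∈ edgesOf p := by
  intro p
  induction p with
  | nil => intro n u v h; simp at h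
  | cons a q ih =>
    intro n u v h1 h2
    cases n with
    | zero =>
      simp at h1
      cases q with
      | nil => simp at h2
      | cons b r =>
        simp at h2
        subst h1; subst h2
        exact mem_edgesOf_iff.mpr ⟨[], r, rfl⟩
    | succ n =>
      simp only [List.get?_cons_succ] at h1 h2
      obtain ⟨l1, l2, hh⟩ := mem_edgesOf_iff.mp (ih h1 h2)
      exact mem_edgesOf_iff.mpr ⟨a :: l1, l2, by rw [List.cons_append, hh]⟩

theorem get?_of_mem_edgesOf {p : List V} {u v : V} (h : (u, v) ∈ edgesOf p) :
    ∃ n, p.get? n = some u ∧ p.get? (n + 1) = some v := by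
  obtain ⟨l1, l2, rfl⟩ := mem_edgesOf_iff.mp h
  refine ⟨l1.length, ?_, ?_⟩
  · rw [List.get?_append_right le_rfl]; simp
  · rw [List.get?_append_right (by omega)]
    rw [show l1.length + 1 - l1.length = 1 by omega]
    rfl

theorem out_unique {p : List V} (hN : p.Nodup) {u v w : V}
    (h1 : (u, v) ∈ edgesOf p) (h2 : (u, w) ∈ edgesOf p) : v = w := by
  obtain ⟨n, hn1, hn2⟩ := get?_of_mem_edgesOf h1
  obtain ⟨m, hm1, hm2⟩ := get?_of_mem_edgesOf h2
  have hlt : n < p.length := List.get?_eq_some.mp hn1 |>.1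
  have : n = m := List.get?_inj hlt hN (hn1.trans hm1.symm)
  subst this
  rw [hn2] at hm2
  exact Option.some.inj hm2


section Ord
variable {ord : V → ℕ}

/-- strict `ord`-increase pairwise along a list. -/
theorem eq_of_ord_eq {p : List V} (hp : List.Pairwise (fun x y => ord x < ord y) p)
    {u a : V} (hu : u ∈ p) (ha : a ∈ p) (h : ord u = ord a) : u = a := by
  rw [List.mem_iff_get] at hu ha
  obtain ⟨nu, rfl⟩ := hu
  obtain ⟨na, rfl⟩ := ha
  rw [List.pairwise_iff_get] at hp
  rcases lt_trichotomy nu na with hlt | heq | hgt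
  · exact absurd (hp _ _ hlt) (by omega)
  · rw [heq]
  · exact absurd (hp _ _ hgt) (by omega)

theorem not_between_consec {p : List V} (hp : List.Pairwise (fun x y => ord x < ord y) p)
    {u w x : V} (huw : (u, w) ∈ edgesOf p) (hx : x ∈ p)
    (h1 : ord u < ord x) (h2 : ord x < ord w) : False := by
  obtain ⟨l1, l2, rfl⟩ := mem_edgesOf_iff.mp huw
  rw [List.pairwise_append] at hp
  rcases List.mem_append.mp hx with hxl | hxr
  · exact absurd (hp.2.2 x hxl u (by simp)) (by omega)
  · rcases List.mem_cons.mp hxr with rfl | hxr'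
    · omega
    rcases List.mem_cons.mp hxr' with rfl | hxr''
    · omega
    · have := (List.pairwise_cons.mp (List.pairwise_cons.mp hp.2.1).2).1 x hxr''
      omega

theorem ord_head_le {p : List V} (hp : List.Pairwise (fun x y => ord x < ord y) p)
    {s u : V} (hs : p.head? = some s) (hu : u ∈ p) : ord s ≤ ord u := by
  cases p with
  | nil => simp at hs
  | cons x q =>
    simp only [List.head?_cons, Option.some.injEq] at hs
    subst hs
    rcases List.mem_cons.mp hu with rfl | hu'
    · exact le_rfl
    · exact ((List.pairwise_cons.mp hp).1 u hu').le

theorem ord_le_getLast {p : List V} (hp : List.Pairwise (fun x y => ord x < ord y) p)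
    {t u : V} (ht : p.getLast? = some t) (hu : u ∈ p) : ord u ≤ ord t := by
  induction p with
  | nil => simp at ht
  | cons x q ih =>
    cases q with
    | nil =>
      simp only [List.getLast?_singleton, Option.some.injEq] at ht
      simp only [List.mem_singleton] at hu
      subst ht; subst hu; exact le_rfl
    | cons y r =>
      rw [List.getLast?_cons_cons] at ht
      have htm : t ∈ y :: r := by
        have : t ∈ (y :: r) := by
          have h' := ht
          exact List.mem_of_mem_getLast? (by simpa using h')
        exact this
      rcases List.mem_cons.mp hu with rfl | hu'
      · exact ((List.pairwise_cons.mp hp).1 t htm).le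
      · exact ih (List.pairwise_cons.mp hp).2 ht hu'

theorem exists_succ_of_ne_getLast {p : List V} {v t : V} (hv : v ∈ p)
    (ht : p.getLast? = some t) (hne : v ≠ t) : ∃ w, (v, w) ∈ edgesOf p := by
  obtain ⟨l1, l2, rfl⟩ := List.append_of_mem hv
  cases l2 with
  | nil =>
    exfalso
    rw [show l1 ++ [v] = l1 ++ [v] from rfl, List.getLast?_concat] at ht
    exact hne (Option.some.inj ht)
  | cons w r => exact ⟨w, mem_edgesOf_iff.mpr ⟨l1, r, rfl⟩⟩

theorem mem_endpoints_of_chain' {Q : V → V → Prop} {p : List V} (hc : List.Chain' Q p)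
    {v : V} (hv : v ∈ p) : (∃ w, Q v w ∨ Q w v) ∨ p = [v] := by
  induction p with
  | nil => cases hv
  | cons x q ih =>
    cases q with
    | nil =>
      right
      simp only [List.mem_singleton] at hv
      rw [hv]
    | cons y r =>
      have hxy : Q x y := (List.isChain_cons_cons.mp hc).1
      rcases List.mem_cons.mp hv with rfl | hv'
      · exact Or.inl ⟨y, Or.inl hxy⟩
      · rcases ih (List.isChain_cons_cons.mp hc).2 hv' with h | h
        · exact Or.inl h
        · have : y = v := by injection h
          subst this
          exact Or.inl ⟨x, Or.inr hxy⟩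

/-- `u` occurs (strictly) before `v` in `p`. -/
def Before (u v : V) (p : List V) : Prop := ∃ l1 l2, p = l1 ++ u :: l2 ∧ v ∈ l2

theorem before_of_sublist {u v : V} : ∀ {p : List V}, List.Sublist [u, v] p → Before u v p := by
  intro p h
  induction p with
  | nil => cases h
  | cons a q ih =>
    cases h with
    | cons _ h' =>
      obtain ⟨l1, l2, heq, hv⟩ := ih h'
      exact ⟨a :: l1, l2, by rw [heq, List.cons_append], hv⟩
    | cons_cons _ h' =>
      exact ⟨[], q, rfl, h'.subset (List.mem_singleton_self v)⟩

theorem ord_lt_of_before {p : List V} (hp : List.Pairwise (fun x y => ord x < ord y) p)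
    {u v : V} (h : Before u v p) : ord u < ord v := by
  obtain ⟨l1, l2, rfl, hv⟩ := h
  rw [List.pairwise_append] at hp
  exact (List.pairwise_cons.mp hp.2.1).1 v hv

theorem before_of_ord_lt {p : List V} (hp : List.Pairwise (fun x y => ord x < ord y) p)
    {u v : V} (hu : u ∈ p) (hv : v ∈ p) (h : ord u < ord v) : Before u v p := by
  rw [List.mem_iff_get] at hu hv
  obtain ⟨nu, rfl⟩ := hu
  obtain ⟨nv, rfl⟩ := hv
  have hlt : (nu : ℕ) < (nv : ℕ) := by
    by_contra hc
    push_neg at hc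
    rcases eq_or_lt_of_le hc with heq | hlt
    · have : nv = nu := Fin.ext heq; rw [this] at h; omega
    · exact absurd (List.pairwise_iff_get.mp hp _ _ hlt) (by omega)
  refine ⟨p.take nu, p.drop (nu + 1), ?_, ?_⟩
  · have h2 := List.take_append_drop (nu : ℕ) p
    rw [List.drop_eq_getElem_cons nu.isLt] at h2
    rw [List.get_eq_getElem]
    exact h2.symm
  · rw [List.mem_iff_get?]
    refine ⟨(nv : ℕ) - (nu + 1), ?_⟩
    rw [List.get?_drop]
    rw [show nu + 1 + ((nv : ℕ) - (nu + 1)) = (nv : ℕ) by omega]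
    simp [List.get?_eq_get nv.isLt]

end Ord

theorem dropWhile_ne_append {a : V} : ∀ (l1 : List V), a ∉ l1 → ∀ (rest : List V),
    (l1 ++ a :: rest).dropWhile (fun v => decide (v ≠ a)) = a :: rest := by
  intro l1
  induction l1 with
  | nil => intro _ rest; simp
  | cons x l1' ih =>
    intro hx rest
    rw [List.cons_append, List.dropWhile_cons_of_pos]
    · exact ih (fun h => hx (List.mem_cons_of_mem _ h)) rest
    · simp only [decide_eq_true_eq, ne_eq]
      intro h
      exact hx (h ▸ (List.mem_cons_self (a := x) (l := l1')))

theorem takeWhile_ne_append {z : V} : ∀ (m : List V), z ∉ m → ∀ (r : List V),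
    (m ++ z :: r).takeWhile (fun v => decide (v ≠ z)) = m := by
  intro m
  induction m with
  | nil => intro _ r; simp
  | cons y m' ih =>
    intro hy r
    rw [List.cons_append, List.takeWhile_cons_of_pos]
    · rw [ih (fun h => hy (List.mem_cons_of_mem _ h)) r]
    · simp only [decide_eq_true_eq, ne_eq]
      intro h
      exact hy (h ▸ (List.mem_cons_self (a := y) (l := m')))

theorem segment_eq {p l1 l2 : List V} {a z : V} (hN : p.Nodup)
    (hp : p = l1 ++ a :: l2) (hz : z ∈ l2) :
    ∃ m r, l2 = m ++ z :: r ∧ segment p a z = a :: (m ++ [z]) := by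
  obtain ⟨m, r, rfl⟩ := List.append_of_mem hz
  refine ⟨m, r, rfl, ?_⟩
  subst hp
  have hNl2 : (a :: (m ++ z :: r)).Nodup := (List.sublist_append_right _ _).nodup hN
  have hal2 : a ∉ m ++ z :: r := (List.nodup_cons.mp hNl2).1
  have hNl2' : (m ++ z :: r).Nodup := (List.nodup_cons.mp hNl2).2
  have hzm : z ∉ m := by
    rw [List.nodup_append] at hNl2'
    intro hzm'
    exact hNl2'.2.2 z hzm' z List.mem_cons_self rfl
  have haz : (z : V) ≠ a := fun h => hal2 (h ▸ hz)
  have ha1 : a ∉ l1 := by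
    rw [List.nodup_append] at hN
    intro ha1'
    exact hN.2.2 a ha1' a List.mem_cons_self rfl
  unfold segment
  rw [dropWhile_ne_append l1 ha1, List.takeWhile_cons_of_pos (by simp [Ne, haz.symm]),
    takeWhile_ne_append m hzm]
  simp

theorem edgesOf_length (p : List V) : (edgesOf p).length = p.length - 1 := by
  simp [edgesOf, List.length_zip]


section Net

variable {k : ℕ} {G : UFN V k}

theorem block_setup (hWF : G.WellFormed) {i : Fin k} {a z : V}
    (hb : G.IsBlock i (a, z)) :
    ∃ ord : V → ℕ,
      (∀ e ∈ edgesOf (G.old i) ++ edgesOf (G.new i), ord e.1 < ord e.2) ∧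
      List.Pairwise (fun x y => ord x < ord y) (G.old i) ∧
      List.Pairwise (fun x y => ord x < ord y) (G.new i) ∧
      a ∈ G.old i ∧ a ∈ G.new i ∧ z ∈ G.old i ∧ z ∈ G.new i ∧
      Before a z (G.old i) ∧ Before a z (G.new i) ∧ ord a < ord z ∧
      (∀ v, v ∈ G.old i → v ∈ G.new i → ord a < ord v → ord v < ord z → False) := by
  obtain ⟨ord, hordE⟩ := hWF.2.1 i
  haveI : IsTrans V (fun x y => ord x < ord y) := ⟨fun _ _ _ h1 h2 => lt_trans h1 h2⟩
  have hPo : List.Pairwise (fun x y => ord x < ord y) (G.old i) :=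
    List.isChain_iff_pairwise.mp (chain'_of_forall_edges
      (fun e he => hordE e (List.mem_append_left _ he)))
  have hPn : List.Pairwise (fun x y => ord x < ord y) (G.new i) :=
    List.isChain_iff_pairwise.mp (chain'_of_forall_edges
      (fun e he => hordE e (List.mem_append_right _ he)))
  have hsubc : List.Sublist (G.commons i) (G.old i) := List.filter_sublist
  have hPc : List.Pairwise (fun x y => ord x < ord y) (G.commons i) := hPo.sublist hsubc
  have hazc : List.Sublist [a, z] (G.commons i) := by
    obtain ⟨c1, c2, hc⟩ := mem_edgesOf_iff.mp hb
    rw [hc]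
    have h1 : List.Sublist [a, z] (a :: z :: c2) :=
      List.Sublist.cons₂ a (List.Sublist.cons₂ z (List.nil_sublist c2))
    exact h1.trans (List.sublist_append_right c1 _)
  have haC : a ∈ G.commons i := hazc.subset (by simp)
  have hzC : z ∈ G.commons i := hazc.subset (by simp)
  have hmemnew : ∀ v ∈ G.commons i, v ∈ G.new i := by
    intro v hv
    have := List.mem_filter.mp hv
    simpa using this.2
  have hao : a ∈ G.old i := hsubc.subset haC
  have hzo : z ∈ G.old i := hsubc.subset hzC
  have han : a ∈ G.new i := hmemnew a haC
  have hzn : z ∈ G.new i := hmemnew z hzC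
  have hBo : Before a z (G.old i) := before_of_sublist (hazc.trans hsubc)
  have haz : ord a < ord z := ord_lt_of_before hPo hBo
  have hBn : Before a z (G.new i) := before_of_ord_lt hPn han hzn haz
  refine ⟨ord, hordE, hPo, hPn, hao, han, hzo, hzn, hBo, hBn, haz, ?_⟩
  intro v hvo hvn h1 h2
  have hvC : v ∈ G.commons i := List.mem_filter.mpr ⟨hvo, by simpa using hvn⟩
  exact not_between_consec hPc hb hvC h1 h2

theorem seg_struct {p : List V} (hN : p.Nodup) {a z : V} (hB : Before a z p) :
    ∃ m, segment p a z = a :: (m ++ [z]) ∧ segment p a z <:+: p := by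
  obtain ⟨l1, l2, rfl, hz⟩ := hB
  obtain ⟨m, r, rfl, hseg⟩ := segment_eq hN rfl hz
  exact ⟨m, hseg, ⟨l1, r, by rw [hseg]; simp⟩⟩

theorem common_mem_transient {i : Fin k} {ord : V → ℕ}
    (hordE : ∀ e ∈ edgesOf (G.old i) ++ edgesOf (G.new i), ord e.1 < ord e.2)
    (hso : (G.old i).head? = some G.s) (hto : (G.old i).getLast? = some G.t)
    {U : Set (V × Fin k)} {T : List V}
    (hT : UFN.IsPathIn (G.active U i) G.s G.t T)
    {a : V} (hao : a ∈ G.old i) (han : a ∈ G.new i) : a ∈ T := by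
  haveI : IsTrans V (fun x y => ord x < ord y) := ⟨fun _ _ _ h1 h2 => lt_trans h1 h2⟩
  have hPo : List.Pairwise (fun x y => ord x < ord y) (G.old i) :=
    List.isChain_iff_pairwise.mp (chain'_of_forall_edges
      (fun e he => hordE e (List.mem_append_left _ he)))
  have hPn : List.Pairwise (fun x y => ord x < ord y) (G.new i) :=
    List.isChain_iff_pairwise.mp (chain'_of_forall_edges
      (fun e he => hordE e (List.mem_append_right _ he)))
  obtain ⟨hT1, hT2, hTc, hTnd⟩ := hT
  have hactE : ∀ e ∈ edgesOf T, G.active U i e :=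
    fun e he => forall_edges_of_chain' hTc e he
  have hoen : ∀ e ∈ edgesOf T,
      e ∈ edgesOf (G.old i) ∨ e ∈ edgesOf (G.new i) := by
    intro e he
    rcases hactE e he with ⟨h, _⟩ | ⟨h, _⟩
    · exact Or.inl h
    · exact Or.inr h
  have hordT : ∀ e ∈ edgesOf T, ord e.1 < ord e.2 := by
    intro e he
    rcases hoen e he with h | h
    · exact hordE e (List.mem_append_left _ h)
    · exact hordE e (List.mem_append_right _ h)
  have hsold : G.s ∈ G.old i := List.mem_of_mem_head? (by rw [hso]; rfl)
  have hVERT : ∀ v ∈ T, v ∈ G.old i ∨ v ∈ G.new i := by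
    intro v hv
    rcases mem_endpoints_of_chain' hTc hv with ⟨w, hw | hw⟩ | hsingle
    · rcases hw with ⟨h, _⟩ | ⟨h, _⟩
      · exact Or.inl (mem_fst_of_edgesOf h)
      · exact Or.inr (mem_fst_of_edgesOf h)
    · rcases hw with ⟨h, _⟩ | ⟨h, _⟩
      · exact Or.inl (mem_snd_of_edgesOf h)
      · exact Or.inr (mem_snd_of_edgesOf h)
    · have hvs : v = G.s := by rw [hsingle] at hT1; simpa using hT1
      exact Or.inl (hvs ▸ hsold)
  have key : ∀ d j, ∀ hj : j < T.length, T.length - j ≤ d →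
      ord (T.get ⟨j, hj⟩) ≤ ord a → a ∈ T := by
    intro d
    induction d with
    | zero => intro j hj hd _; omega
    | succ d ih =>
      intro j hj hd hle
      rcases eq_or_lt_of_le hle with heq | hlt
      · rcases hVERT _ (T.get_mem ⟨j, hj⟩) with hvo | hvn
        · exact eq_of_ord_eq hPo hvo hao heq ▸ T.get_mem ⟨j, hj⟩
        · exact eq_of_ord_eq hPn hvn han heq ▸ T.get_mem ⟨j, hj⟩
      · by_cases hj1 : j + 1 < T.length
        · have hedge : G.active U i (T.get ⟨j, hj⟩, T.get ⟨j + 1, hj1⟩) := by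
            have := List.isChain_iff_getElem.mp hTc j (by omega)
            convert this using 3 <;> rfl
          rcases le_or_gt (ord (T.get ⟨j + 1, hj1⟩)) (ord a) with h2 | h2
          · exact ih (j + 1) hj1 (by omega) h2
          · exfalso
            rcases hedge with ⟨h, _⟩ | ⟨h, _⟩
            · exact not_between_consec hPo h hao hlt h2
            · exact not_between_consec hPn h han hlt h2
        · exfalso
          have hjt : T.get? j = some G.t := by
            have h1 := List.getLast?_eq_getElem? (l := T)
            rw [hT2] at h1
            rw [show j = T.length - 1 by omega] at hj ⊢
            rw [← List.get?_eq_getElem?] at h1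
            exact h1.symm
          have hgt : T.get ⟨j, hj⟩ = G.t := by
            rw [List.get?_eq_get hj] at hjt
            exact Option.some.inj hjt
          have h2 : ord a ≤ ord G.t := ord_le_getLast hPo hto hao
          rw [hgt] at hlt
          omega
  obtain ⟨x, T', rfl⟩ : ∃ x T', T = x :: T' := by
    cases T with
    | nil => simp at hT1
    | cons x T' => exact ⟨x, T', rfl⟩
  have hxs : x = G.s := by simpa using hT1
  apply key (x :: T').length 0 (by simp) (by omega)
  show ord x ≤ ord a
  rw [hxs]
  exact ord_head_le hPo hso hao


theorem transient_new_seg (hWF : G.WellFormed) {i : Fin k} {a z : V}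
    (hb : G.IsBlock i (a, z)) {U : Set (V × Fin k)} {T : List V}
    (hT : UFN.IsPathIn (G.active U i) G.s G.t T) (haU : (a, i) ∈ U) :
    (∀ e ∈ edgesOf (segment (G.new i) a z), e ∈ edgesOf T) ∧
    (∀ v ∈ segment (G.new i) a z, v ≠ z → (v, i) ∈ U) := by
  obtain ⟨ord, hordE, hPo, hPn, hao, han, hzo, hzn, hBo, hBn, haz, hnc⟩ := block_setup hWF hb
  obtain ⟨hso, hto, hNo⟩ := (hWF.1 i).1
  obtain ⟨hsn, htn, hNn⟩ := (hWF.1 i).2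
  obtain ⟨m, hseg, hinfix⟩ := seg_struct hNn hBn
  set seg := segment (G.new i) a z with hsegdef
  have hsegN : seg.Nodup := hinfix.sublist.nodup hNn
  have hPseg : List.Pairwise (fun x y => ord x < ord y) seg := hPn.sublist hinfix.sublist
  have hsegsub : ∀ v ∈ seg, v ∈ G.new i := fun v hv => hinfix.sublist.subset hv
  have hordm : ∀ v ∈ m, ord a < ord v ∧ ord v < ord z := by
    intro v hv
    have h1 := (List.pairwise_cons.mp (hseg ▸ hPseg)).1 v (by simp [hv])
    have hp2 := (List.pairwise_cons.mp (hseg ▸ hPseg)).2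
    rw [List.pairwise_append] at hp2
    exact ⟨h1, hp2.2.2 v hv z (by simp)⟩
  have hint : ∀ v ∈ m, v ∉ G.old i := by
    intro v hv hvold
    have hvn : v ∈ G.new i := hsegsub v (by rw [hseg]; simp [hv])
    exact hnc v hvold hvn (hordm v hv).1 (hordm v hv).2
  have hamem : a ∈ T := common_mem_transient hordE hso hto hT hao han
  have hatne : a ≠ G.t := by
    intro h
    have h2 : ord z ≤ ord G.t := ord_le_getLast hPo hto hzo
    rw [h] at haz
    omega
  obtain ⟨hT1, hT2, hTc, hTnd⟩ := hT
  have hactE : ∀ e ∈ edgesOf T, G.active U i e :=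
    fun e he => forall_edges_of_chain' hTc e he
  have hseglen : seg.length = m.length + 2 := by rw [hseg]; simp
  have hz_idx : ∀ n, seg.get? n = some z → n = m.length + 1 := by
    intro n hn
    have h2 : seg.get? (m.length + 1) = some z := by
      rw [hseg, List.get?_cons_succ, List.get?_append_right le_rfl]
      simp
    exact List.get?_inj (List.get?_eq_some.mp hn).1 hsegN (hn.trans h2.symm)
  have main : ∀ n v, seg.get? n = some v →
      v ∈ T ∧ (v ≠ z → (v, i) ∈ U ∧ ∀ w, seg.get? (n + 1) = some w → (v, w) ∈ edgesOf T) := by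
    intro n
    induction n with
    | zero =>
      intro v hv
      have hva : v = a := by
        rw [hseg] at hv
        simp only [List.get?_cons_zero, Option.some.injEq] at hv
        exact hv.symm
      subst hva
      refine ⟨hamem, fun _ => ⟨haU, ?_⟩⟩
      intro w hw
      obtain ⟨w', hw'⟩ := exists_succ_of_ne_getLast hamem hT2 hatne
      have hact : G.active U i (v, w') := hactE _ hw'
      have hnewE : (v, w') ∈ edgesOf (G.new i) := by
        rcases hact with ⟨_, hnu⟩ | ⟨h, _⟩
        · exact absurd haU hnu
        · exact h
      have hwseg : (v, w) ∈ edgesOf seg := edgesOf_of_get? hv hw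
      have hwnew : (v, w) ∈ edgesOf (G.new i) := edgesOf_subset_of_infix hinfix _ hwseg
      rw [out_unique hNn hwnew hnewE]
      exact hw'
    | succ n ih =>
      intro v hv
      have hlt : n + 1 < seg.length := (List.get?_eq_some.mp hv).1
      obtain ⟨v', hv'⟩ : ∃ v', seg.get? n = some v' :=
        ⟨_, List.get?_eq_get (show n < seg.length by omega)⟩
      obtain ⟨hvT', hrest⟩ := ih v' hv'
      have hne' : v' ≠ z := by
        intro h
        subst h
        have := hz_idx n hv'
        omega
      obtain ⟨hU', hedge⟩ := hrest hne'
      have hvT : v ∈ T := mem_snd_of_edgesOf (hedge v hv)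
      refine ⟨hvT, fun hvz => ?_⟩
      have hv_m : v ∈ m := by
        rw [hseg, List.get?_cons_succ] at hv
        have hvm : v ∈ m ++ [z] := List.get?_mem hv
        rcases List.mem_append.mp hvm with h | h
        · exact h
        · simp only [List.mem_singleton] at h
          exact absurd h hvz
      have hvold : v ∉ G.old i := hint v hv_m
      have hvt : v ≠ G.t := by
        intro h
        have h1 := (hordm v hv_m).2
        have h2 : ord z ≤ ord G.t := ord_le_getLast hPn htn hzn
        rw [h] at h1
        omega
      obtain ⟨w', hw'⟩ := exists_succ_of_ne_getLast hvT hT2 hvt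
      have hact := hactE _ hw'
      obtain ⟨hU2, hnewE⟩ : (v, i) ∈ U ∧ (v, w') ∈ edgesOf (G.new i) := by
        rcases hact with ⟨h, _⟩ | ⟨h, hu⟩
        · exact absurd (mem_fst_of_edgesOf h) hvold
        · exact ⟨hu, h⟩
      refine ⟨hU2, fun w hw => ?_⟩
      have hwseg : (v, w) ∈ edgesOf seg := edgesOf_of_get? hv hw
      have hwnew := edgesOf_subset_of_infix hinfix _ hwseg
      rw [out_unique hNn hwnew hnewE]
      exact hw'
  constructor
  · rintro ⟨u, w⟩ he
    obtain ⟨n, hn1, hn2⟩ := get?_of_mem_edgesOf he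
    have hnz : u ≠ z := by
      intro h
      subst h
      have h1 := hz_idx n hn1
      have h2 := (List.get?_eq_some.mp hn2).1
      omega
    exact ((main n u hn1).2 hnz).2 w hn2
  · intro v hv hvz
    obtain ⟨n, hn⟩ := List.mem_iff_get?.mp hv
    exact ((main n v hn).2 hvz).1

theorem transient_old_seg (hWF : G.WellFormed) {i : Fin k} {a z : V}
    (hb : G.IsBlock i (a, z)) {U : Set (V × Fin k)} {T : List V}
    (hT : UFN.IsPathIn (G.active U i) G.s G.t T) (haU : (a, i) ∉ U) :
    (∀ e ∈ edgesOf (segment (G.old i) a z), e ∈ edgesOf T) ∧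
    (∀ v ∈ segment (G.old i) a z, v ≠ z → (v, i) ∉ U) := by
  obtain ⟨ord, hordE, hPo, hPn, hao, han, hzo, hzn, hBo, hBn, haz, hnc⟩ := block_setup hWF hb
  obtain ⟨hso, hto, hNo⟩ := (hWF.1 i).1
  obtain ⟨hsn, htn, hNn⟩ := (hWF.1 i).2
  obtain ⟨m, hseg, hinfix⟩ := seg_struct hNo hBo
  set seg := segment (G.old i) a z with hsegdef
  have hsegN : seg.Nodup := hinfix.sublist.nodup hNo
  have hPseg : List.Pairwise (fun x y => ord x < ord y) seg := hPo.sublist hinfix.sublist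
  have hsegsub : ∀ v ∈ seg, v ∈ G.old i := fun v hv => hinfix.sublist.subset hv
  have hordm : ∀ v ∈ m, ord a < ord v ∧ ord v < ord z := by
    intro v hv
    have h1 := (List.pairwise_cons.mp (hseg ▸ hPseg)).1 v (by simp [hv])
    have hp2 := (List.pairwise_cons.mp (hseg ▸ hPseg)).2
    rw [List.pairwise_append] at hp2
    exact ⟨h1, hp2.2.2 v hv z (by simp)⟩
  have hint : ∀ v ∈ m, v ∉ G.new i := by
    intro v hv hvnew
    have hvo : v ∈ G.old i := hsegsub v (by rw [hseg]; simp [hv])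
    exact hnc v hvo hvnew (hordm v hv).1 (hordm v hv).2
  have hamem : a ∈ T := common_mem_transient hordE hso hto hT hao han
  have hatne : a ≠ G.t := by
    intro h
    have h2 : ord z ≤ ord G.t := ord_le_getLast hPo hto hzo
    rw [h] at haz
    omega
  obtain ⟨hT1, hT2, hTc, hTnd⟩ := hT
  have hactE : ∀ e ∈ edgesOf T, G.active U i e :=
    fun e he => forall_edges_of_chain' hTc e he
  have hseglen : seg.length = m.length + 2 := by rw [hseg]; simp
  have hz_idx : ∀ n, seg.get? n = some z → n = m.length + 1 := by
    intro n hn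
    have h2 : seg.get? (m.length + 1) = some z := by
      rw [hseg, List.get?_cons_succ, List.get?_append_right le_rfl]
      simp
    exact List.get?_inj (List.get?_eq_some.mp hn).1 hsegN (hn.trans h2.symm)
  have main : ∀ n v, seg.get? n = some v →
      v ∈ T ∧ (v ≠ z → (v, i) ∉ U ∧ ∀ w, seg.get? (n + 1) = some w → (v, w) ∈ edgesOf T) := by
    intro n
    induction n with
    | zero =>
      intro v hv
      have hva : v = a := by
        rw [hseg] at hv
        simp only [List.get?_cons_zero, Option.some.injEq] at hv
        exact hv.symm
      subst hva
      refine ⟨hamem, fun _ => ⟨haU, ?_⟩⟩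
      intro w hw
      obtain ⟨w', hw'⟩ := exists_succ_of_ne_getLast hamem hT2 hatne
      have hact : G.active U i (v, w') := hactE _ hw'
      have holdE : (v, w') ∈ edgesOf (G.old i) := by
        rcases hact with ⟨h, _⟩ | ⟨_, hu⟩
        · exact h
        · exact absurd hu haU
      have hwseg : (v, w) ∈ edgesOf seg := edgesOf_of_get? hv hw
      have hwold : (v, w) ∈ edgesOf (G.old i) := edgesOf_subset_of_infix hinfix _ hwseg
      rw [out_unique hNo hwold holdE]
      exact hw'
    | succ n ih =>
      intro v hv
      have hlt : n + 1 < seg.length := (List.get?_eq_some.mp hv).1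
      obtain ⟨v', hv'⟩ : ∃ v', seg.get? n = some v' :=
        ⟨_, List.get?_eq_get (show n < seg.length by omega)⟩
      obtain ⟨hvT', hrest⟩ := ih v' hv'
      have hne' : v' ≠ z := by
        intro h
        subst h
        have := hz_idx n hv'
        omega
      obtain ⟨hU', hedge⟩ := hrest hne'
      have hvT : v ∈ T := mem_snd_of_edgesOf (hedge v hv)
      refine ⟨hvT, fun hvz => ?_⟩
      have hv_m : v ∈ m := by
        rw [hseg, List.get?_cons_succ] at hv
        have hvm : v ∈ m ++ [z] := List.get?_mem hv
        rcases List.mem_append.mp hvm with h | h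
        · exact h
        · simp only [List.mem_singleton] at h
          exact absurd h hvz
      have hvnew : v ∉ G.new i := hint v hv_m
      have hvt : v ≠ G.t := by
        intro h
        have h1 := (hordm v hv_m).2
        have h2 : ord z ≤ ord G.t := ord_le_getLast hPo hto hzo
        rw [h] at h1
        omega
      obtain ⟨w', hw'⟩ := exists_succ_of_ne_getLast hvT hT2 hvt
      have hact := hactE _ hw'
      obtain ⟨hU2, holdE⟩ : (v, i) ∉ U ∧ (v, w') ∈ edgesOf (G.old i) := by
        rcases hact with ⟨h, hu⟩ | ⟨h, _⟩
        · exact ⟨hu, h⟩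
        · exact absurd (mem_fst_of_edgesOf h) hvnew
      refine ⟨hU2, fun w hw => ?_⟩
      have hwseg : (v, w) ∈ edgesOf seg := edgesOf_of_get? hv hw
      have hwold := edgesOf_subset_of_infix hinfix _ hwseg
      rw [out_unique hNo hwold holdE]
      exact hw'
  constructor
  · rintro ⟨u, w⟩ he
    obtain ⟨n, hn1, hn2⟩ := get?_of_mem_edgesOf he
    have hnz : u ≠ z := by
      intro h
      subst h
      have h1 := hz_idx n hn1
      have h2 := (List.get?_eq_some.mp hn2).1
      omega
    exact ((main n u hn1).2 hnz).2 w hn2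
  · intro v hv hvz
    obtain ⟨n, hn⟩ := List.mem_iff_get?.mp hv
    exact ((main n v hn).2 hvz).1



theorem blk_seg_facts (hWF : G.WellFormed) {i : Fin k} {a z : V} (hb : G.IsBlock i (a, z)) :
    (∃ m, segment (G.new i) a z = a :: (m ++ [z]) ∧ (segment (G.new i) a z).Nodup) ∧
    (∃ m, segment (G.old i) a z = a :: (m ++ [z]) ∧ (segment (G.old i) a z).Nodup) := by
  obtain ⟨ord, hordE, hPo, hPn, hao, han, hzo, hzn, hBo, hBn, haz, hnc⟩ := block_setup hWF hb
  obtain ⟨hso, hto, hNo⟩ := (hWF.1 i).1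
  obtain ⟨hsn, htn, hNn⟩ := (hWF.1 i).2
  obtain ⟨mn, hsegn, hinfn⟩ := seg_struct hNn hBn
  obtain ⟨mo, hsego, hinfo⟩ := seg_struct hNo hBo
  exact ⟨⟨mn, hsegn, hinfn.sublist.nodup hNn⟩, ⟨mo, hsego, hinfo.sublist.nodup hNo⟩⟩

theorem exists_internal {p : List V} {a z : V} {m : List V}
    (hseg : p = a :: (m ++ [z])) (hnd : p.Nodup) (hlen : 2 ≤ (edgesOf p).length) :
    ∃ v, v ∈ p ∧ v ≠ a ∧ v ≠ z := by
  have hmne : m ≠ [] := by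
    intro h
    rw [edgesOf_length, hseg, h] at hlen
    simp at hlen
  obtain ⟨v, m', rfl⟩ := List.exists_cons_of_ne_nil hmne
  rw [hseg] at hnd ⊢
  refine ⟨v, by simp, ?_, ?_⟩
  · intro h
    subst h
    exact (List.nodup_cons.mp hnd).1 (by simp)
  · intro h
    subst h
    have h2 := (List.nodup_cons.mp hnd).2
    rw [List.nodup_append] at h2
    exact h2.2.2 v List.mem_cons_self v (List.mem_singleton_self v) rfl

theorem extra_new (hWF : G.WellFormed) {i : Fin k} {a z : V}
    (hb : G.IsBlock i (a, z)) (hlen : 2 ≤ (edgesOf (segment (G.new i) a z)).length)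
    {R : V × Fin k → ℕ} (hR : G.Feasible R) : ∃ v, R (v, i) < R (a, i) := by
  obtain ⟨⟨m, hseg, hnd⟩, -⟩ := blk_seg_facts hWF hb
  obtain ⟨v, hvmem, hvne_a, hvne_z⟩ := exists_internal hseg hnd hlen
  obtain ⟨T, hTP, -⟩ := hR (R (a, i)) {(a, i)}
    (by rintro u hu; rw [Set.mem_singleton_iff] at hu; rw [hu])
  have haU : (a, i) ∈ {u | R u < R (a, i)} ∪ {(a, i)} :=
    Set.mem_union_right _ rfl
  have h := (transient_new_seg hWF hb (hTP i).1 haU).2 v hvmem hvne_z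
  rcases (Set.mem_union _ _ _).mp h with h | h
  · exact ⟨v, h⟩
  · exact absurd (congrArg Prod.fst (Set.mem_singleton_iff.mp h)) hvne_a

theorem extra_old (hWF : G.WellFormed) {i : Fin k} {a z : V}
    (hb : G.IsBlock i (a, z)) (hlen : 2 ≤ (edgesOf (segment (G.old i) a z)).length)
    {R : V × Fin k → ℕ} (hR : G.Feasible R) : ∃ v, R (a, i) < R (v, i) := by
  obtain ⟨-, ⟨m, hseg, hnd⟩⟩ := blk_seg_facts hWF hb
  obtain ⟨v, hvmem, hvne_a, hvne_z⟩ := exists_internal hseg hnd hlen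
  refine ⟨v, ?_⟩
  by_contra hcon
  push_neg at hcon
  obtain ⟨T, hTP, -⟩ := hR (R (v, i)) {(v, i)}
    (by rintro u hu; rw [Set.mem_singleton_iff] at hu; rw [hu])
  have haU : (a, i) ∉ {u | R u < R (v, i)} ∪ {(v, i)} := by
    intro h
    rcases (Set.mem_union _ _ _).mp h with h | h
    · have : R (a, i) < R (v, i) := h
      omega
    · exact hvne_a (congrArg Prod.fst (Set.mem_singleton_iff.mp h)).symm
  have h := (transient_old_seg hWF hb (hTP i).1 haU).2 v hvmem hvne_z
  exact h (Set.mem_union_right _ rfl)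

theorem dep_lt {G : UFN V 2} (hWF : G.WellFormed) {b1 b2 : UFN.Blk V 2}
    (hdep : G.Dep b1 b2) {R : V × Fin 2 → ℕ} (hR : G.Feasible R) :
    R (b2.2.1, b2.1) < R (b1.2.1, b1.1) := by
  obtain ⟨i1, a1, z1⟩ := b1
  obtain ⟨i2, a2, z2⟩ := b2
  obtain ⟨hb1, hb2, hne, e, he1, he2, hcap⟩ := hdep
  simp only at hb1 hb2 hne he1 he2 hcap ⊢
  by_contra hcon
  push_neg at hcon
  obtain ⟨T, hTP, hcapT⟩ := hR (R (a1, i1)) {(a1, i1)}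
    (by rintro u hu; rw [Set.mem_singleton_iff] at hu; rw [hu])
  have haU : (a1, i1) ∈ {u | R u < R (a1, i1)} ∪ {(a1, i1)} :=
    Set.mem_union_right _ rfl
  have ha2U : (a2, i2) ∉ {u | R u < R (a1, i1)} ∪ {(a1, i1)} := by
    intro h
    rcases (Set.mem_union _ _ _).mp h with h | h
    · have : R (a2, i2) < R (a1, i1) := h
      omega
    · exact hne (congrArg Prod.snd (Set.mem_singleton_iff.mp h)).symm
  have h1 := (transient_new_seg hWF hb1 (hTP i1).1 haU).1 e he1
  have h2 := (transient_old_seg hWF hb2 (hTP i2).1 ha2U).1 e he2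
  obtain ⟨e1, e2⟩ := e
  dsimp only at hcap
  have hc := hcapT e1 e2
  rw [Fin.sum_univ_two] at hc
  have hcases : ∀ j : Fin 2, j = 0 ∨ j = 1 := by decide
  rcases hcases i1 with h3 | h3 <;> rcases hcases i2 with h4 | h4 <;> subst h3 <;> subst h4
  · exact absurd rfl hne
  · rw [if_pos h1, if_pos h2] at hc
    omega
  · rw [if_pos h2, if_pos h1] at hc
    omega
  · exact absurd rfl hne


end Net


end FlowUpdate

open FlowUpdate in
/-- For an update flow network with two flow pairs whose
dependency graph is acyclic, any feasible update sequence uses at least `L + 1`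
rounds, where `L` is the number of blocks on a (longest) directed path in the
dependency graph, provided the earliest-scheduled block on that path (its last
vertex) has at least 2 update edges or the latest-scheduled one (its first
vertex) has at least 2 old edges. -/
theorem stmt16 {V : Type} [DecidableEq V] [Fintype V] (G : UFN V 2)
    (hWF : G.WellFormed) (hacyc : ¬ G.HasDepCycle)
    (c : List (UFN.Blk V 2)) (hne : c ≠ [])
    (hblocks : ∀ b ∈ c, G.IsBlk b) (hchain : List.Chain' G.Dep c)
    (hcond : (∃ b, c.getLast? = some b ∧ 2 ≤ (edgesOf (G.blkNewSeg b)).length) ∨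
             (∃ b, c.head? = some b ∧ 2 ≤ (edgesOf (G.blkOldSeg b)).length))
    (R : V × Fin 2 → ℕ) (hR : G.Feasible R) :
    c.length + 1 ≤ UFN.numRounds R := by
  have hchainR : List.Chain' (fun x y : ℕ => y < x)
      (c.map (fun b : UFN.Blk V 2 => R (b.2.1, b.1))) := by
    rw [List.Chain', List.isChain_map]
    exact hchain.imp (fun _ _ hd => FlowUpdate.dep_lt hWF hd hR)
  haveI : IsTrans ℕ (fun x y : ℕ => y < x) := ⟨fun _ _ _ h1 h2 => lt_trans h2 h1⟩
  have hkey : ∀ rs : List ℕ, List.Chain' (fun x y => y < x) rs →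
      (∀ x ∈ rs, x ∈ Finset.image R Finset.univ) →
      rs.length ≤ UFN.numRounds R := by
    intro rs hch hsub
    have hnd : rs.Nodup :=
      (List.isChain_iff_pairwise.mp hch).imp (fun h => (ne_of_lt h).symm)
    rw [UFN.numRounds, ← List.toFinset_card_of_nodup hnd]
    apply Finset.card_le_card
    intro x hx
    exact hsub x (List.mem_toFinset.mp hx)
  rcases hcond with ⟨b, hlast, hlen⟩ | ⟨b, hhead, hlen⟩
  · have hbmem : b ∈ c := List.mem_of_mem_getLast? (by rw [hlast]; rfl)
    have hblk : G.IsBlk b := hblocks b hbmem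
    obtain ⟨v, hv⟩ := FlowUpdate.extra_new hWF
      (show G.IsBlock b.1 (b.2.1, b.2.2) from hblk) hlen hR
    have hch2 : List.Chain' (fun x y : ℕ => y < x)
        (c.map (fun b : UFN.Blk V 2 => R (b.2.1, b.1)) ++ [R (v, b.1)]) := by
      rw [List.Chain', List.isChain_append]
      refine ⟨hchainR, List.isChain_singleton _, ?_⟩
      intro x hx y hy
      rw [List.getLast?_map, hlast] at hx
      simp only [Option.map_some, Option.mem_def, Option.some.injEq] at hx
      simp only [List.head?_cons, Option.mem_def, Option.some.injEq] at hy
      rw [← hx, ← hy]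
      exact hv
    have hmem : ∀ x ∈ c.map (fun b : UFN.Blk V 2 => R (b.2.1, b.1)) ++ [R (v, b.1)],
        x ∈ Finset.image R Finset.univ := by
      intro x hx
      rcases List.mem_append.mp hx with hx | hx
      · obtain ⟨b', _, rfl⟩ := List.mem_map.mp hx
        exact Finset.mem_image_of_mem R (Finset.mem_univ _)
      · rw [List.mem_singleton] at hx
        rw [hx]
        exact Finset.mem_image_of_mem R (Finset.mem_univ _)
    have hfin := hkey _ hch2 hmem
    simpa using hfin
  · have hbmem : b ∈ c := List.mem_of_mem_head? (by rw [hhead]; rfl)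
    have hblk : G.IsBlk b := hblocks b hbmem
    obtain ⟨v, hv⟩ := FlowUpdate.extra_old hWF
      (show G.IsBlock b.1 (b.2.1, b.2.2) from hblk) hlen hR
    have hch2 : List.Chain' (fun x y : ℕ => y < x)
        (R (v, b.1) :: c.map (fun b : UFN.Blk V 2 => R (b.2.1, b.1))) := by
      rw [List.Chain', List.isChain_cons]
      refine ⟨?_, hchainR⟩
      intro y hy
      rw [List.head?_map, hhead] at hy
      simp only [Option.map_some, Option.mem_def, Option.some.injEq] at hy
      rw [← hy]
      exact hv
    have hmem : ∀ x ∈ R (v, b.1) :: c.map (fun b : UFN.Blk V 2 => R (b.2.1, b.1)),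
        x ∈ Finset.image R Finset.univ := by
      intro x hx
      rcases List.mem_cons.mp hx with hx | hx
      · rw [hx]
        exact Finset.mem_image_of_mem R (Finset.mem_univ _)
      · obtain ⟨b', _, rfl⟩ := List.mem_map.mp hx
        exact Finset.mem_image_of_mem R (Finset.mem_univ _)
    have hfin := hkey _ hch2 hmem
    simpa using hfin
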